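/- Let m be an n-multiweb on finite vertex sets W, B with ordering data L, and let I denote the identity connection, φ(w,b) = I_n for all (w,b). Then Tr_L(m, I) = Σ over edge-n-colorings of m of ∏_{v∈W∪B} c_v, where an edge-n-coloring is a coloring (S,T) with S(w,b) = T(w,b) for all (w,b). That is, the web-trace of an n-multiweb for the identity connection is the signed number of its edge-n-colorings. -/

import Mathlib

/-- The sign `(−1)^{inversions}` of a list of naturals: the signature of the permutation
it represents when it lists a set of distinct values. -/
def listSign (l : List ℕ) : ℤ :=
  (-1) ^ ((Finset.range l.length ×ˢ Finset.range l.length).filter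
      (fun p => p.1 < p.2 ∧ l.getD p.2 0 < l.getD p.1 0)).card

/-- The determinant of the square submatrix of `M` with rows `S` and columns `T`, each
taken in increasing order; junk value `0` if `|S| ≠ |T|`. -/
def subdet {n : ℕ} (M : Matrix (Fin n) (Fin n) ℝ) (S T : Finset (Fin n)) : ℝ :=
  if h : T.card = S.card then
    Matrix.det (Matrix.of fun i j : Fin S.card =>
      M (S.orderEmbOfFin rfl i) (T.orderEmbOfFin h j))
  else 0

/-- An `n`-multiweb on white vertices `W` and black vertices `B`: all row and column
sums of the multiplicity function equal `n`. -/
def IsMultiweb {W B : Type*} [Fintype W] [Fintype B] (n : ℕ) (m : W × B → ℕ) : Prop :=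
  (∀ w : W, ∑ b : B, m (w, b) = n) ∧ (∀ b : B, ∑ w : W, m (w, b) = n)

/-- Ordering data: at each vertex, a list enumerating the opposite vertices once each
(inducing in particular a linear order on the incident edges). -/
def IsOrderData {W B : Type*} [Fintype W] [Fintype B]
    (LW : W → List B) (LB : B → List W) : Prop :=
  (∀ w, (LW w).Nodup ∧ ∀ b, b ∈ LW w) ∧ (∀ b, (LB b).Nodup ∧ ∀ w, w ∈ LB b)

/-- The colorings of a multiweb `m`: pairs `(S,T)` of functions assigning to each edge
`(w,b)` subsets of `{1,…,n}` of size `m(w,b)`, such that at each white vertex the `S`-sets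
partition the colors and at each black vertex the `T`-sets partition the colors. -/
def colorings {W B : Type*} [Fintype W] [Fintype B] [DecidableEq W] [DecidableEq B]
    (n : ℕ) (m : W × B → ℕ) :
    Finset ((W × B → Finset (Fin n)) × (W × B → Finset (Fin n))) :=
  Finset.univ.filter fun ST =>
    (∀ p, (ST.1 p).card = m p) ∧ (∀ p, (ST.2 p).card = m p) ∧
    (∀ w : W, ∀ b b' : B, b ≠ b' → Disjoint (ST.1 (w, b)) (ST.1 (w, b'))) ∧
    (∀ w : W, Finset.univ.biUnion (fun b : B => ST.1 (w, b)) = Finset.univ) ∧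
    (∀ b : B, ∀ w w' : W, w ≠ w' → Disjoint (ST.2 (w, b)) (ST.2 (w', b))) ∧
    (∀ b : B, Finset.univ.biUnion (fun w : W => ST.2 (w, b)) = Finset.univ)

/-- The sign `c_w` at a white vertex `w`: the signature of the permutation of `{1,…,n}`
obtained by concatenating the sets `S(w,b)`, each listed in increasing order, in the
order of the edges at `w` given by the ordering data. -/
def whiteSign {W B : Type*} {n : ℕ} (LW : W → List B)
    (S : W × B → Finset (Fin n)) (w : W) : ℤ :=
  listSign ((LW w).flatMap fun b => (Finset.sort (S (w, b)) (· ≤ ·)).map Fin.val)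

/-- The sign `c_b` at a black vertex `b`, defined analogously using the sets `T(·,b)`. -/
def blackSign {W B : Type*} {n : ℕ} (LB : B → List W)
    (T : W × B → Finset (Fin n)) (b : B) : ℤ :=
  listSign ((LB b).flatMap fun w => (Finset.sort (T (w, b)) (· ≤ ·)).map Fin.val)

/-- The web-trace `Tr_L(m, φ)` of a multiweb `m` with ordering data `L = (LW, LB)` and
`M_n(ℝ)`-connection `φ` (combinatorial formula of Proposition 3.2):
`Σ_{colorings (S,T)} (∏_v c_v) · ∏_{(w,b)} det(φ(w,b)_{S(w,b),T(w,b)})`. -/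
def webTrace {W B : Type*} [Fintype W] [Fintype B] [DecidableEq W] [DecidableEq B]
    (n : ℕ) (m : W × B → ℕ) (LW : W → List B) (LB : B → List W)
    (φ : W × B → Matrix (Fin n) (Fin n) ℝ) : ℝ :=
  ∑ ST ∈ colorings n m,
    (((∏ w, whiteSign LW ST.1 w) * ∏ b, blackSign LB ST.2 b : ℤ) : ℝ) *
      ∏ p : W × B, subdet (φ p) (ST.1 p) (ST.2 p)

lemma subdet_one_self {n : ℕ} (S : Finset (Fin n)) :
    subdet (1 : Matrix (Fin n) (Fin n) ℝ) S S = 1 := by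
  unfold subdet
  rw [dif_pos rfl]
  have h : (Matrix.of fun i j : Fin S.card =>
      (1 : Matrix (Fin n) (Fin n) ℝ) (S.orderEmbOfFin rfl i) (S.orderEmbOfFin rfl j)) = 1 := by
    ext i j
    simp [Matrix.one_apply, (S.orderEmbOfFin rfl).injective.eq_iff]
  rw [h, Matrix.det_one]

lemma subdet_one_ne {n : ℕ} {S T : Finset (Fin n)} (hc : T.card = S.card) (hne : S ≠ T) :
    subdet (1 : Matrix (Fin n) (Fin n) ℝ) S T = 0 := by
  unfold subdet
  rw [dif_pos hc]
  obtain ⟨s, hsS, hsT⟩ : ∃ s ∈ S, s ∉ T := by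
    by_contra h
    push_neg at h
    exact hne (Finset.eq_of_subset_of_card_le h hc.le)
  obtain ⟨i, hi⟩ : ∃ i, S.orderEmbOfFin rfl i = s := by
    have := S.range_orderEmbOfFin rfl
    exact (Set.ext_iff.mp this s).mpr hsS
  apply Matrix.det_eq_zero_of_row_eq_zero i
  intro j
  have hmem := T.orderEmbOfFin_mem hc j
  have : S.orderEmbOfFin rfl i ≠ T.orderEmbOfFin hc j := by
    rw [hi]; rintro rfl; exact hsT hmem
  simp [Matrix.one_apply, this]

/-- Proposition 3.3: the web-trace of an `n`-multiweb for the identity connection is the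
signed number of its edge-`n`-colorings, i.e. the sum of the signs `∏_v c_v` over the
colorings `(S,T)` with `S = T`. -/
theorem webTrace_identity_connection {W B : Type*}
    [Fintype W] [Fintype B] [DecidableEq W] [DecidableEq B]
    (n : ℕ) (hn : 1 ≤ n) (m : W × B → ℕ) (hm : IsMultiweb n m)
    (LW : W → List B) (LB : B → List W) (hL : IsOrderData LW LB) :
    webTrace n m LW LB (fun _ => (1 : Matrix (Fin n) (Fin n) ℝ)) =
      ∑ ST ∈ (colorings n m).filter (fun ST => ST.1 = ST.2),
        (((∏ w, whiteSign LW ST.1 w) * ∏ b, blackSign LB ST.2 b : ℤ) : ℝ) := by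
  unfold webTrace
  rw [Finset.sum_filter]
  apply Finset.sum_congr rfl
  intro ST hST
  have hmem := hST
  simp only [colorings, Finset.mem_filter] at hmem
  obtain ⟨-, h1, h2, -⟩ := hmem
  by_cases h : ST.1 = ST.2
  · rw [if_pos h]
    have : ∀ p : W × B, subdet (1 : Matrix (Fin n) (Fin n) ℝ) (ST.1 p) (ST.2 p) = 1 := by
      intro p; rw [← h]; exact subdet_one_self _
    rw [Finset.prod_congr rfl fun p _ => this p, Finset.prod_const_one, mul_one]
  · rw [if_neg h]
    obtain ⟨p, hp⟩ : ∃ p, ST.1 p ≠ ST.2 p := by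
      by_contra hc; push_neg at hc; exact h (funext hc)
    have : subdet (1 : Matrix (Fin n) (Fin n) ℝ) (ST.1 p) (ST.2 p) = 0 :=
      subdet_one_ne (by rw [h1 p, h2 p]) hp
    rw [Finset.prod_eq_zero (Finset.mem_univ p) this, mul_zero]
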